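/- Let m, n be coprime positive integers. For any (m,n)-Dyck path γ, 0 ≤ h(γ) ≤ |O(γ)| ≤ (m-1)(n-1)/2, and hence 0 ≤ area(γ) ≤ (m-1)(n-1)/2; moreover area(γ) + |O(γ)| = (m-1)(n-1)/2. -/

import Mathlib

open scoped Classical
open Finset

/-- A lattice path is encoded as a list of steps: `false` = horizontal step `(1,0)`,
`true` = vertical step `(0,1)`.  `IsDyck m n w` says `w` is an `(m,n)`-Dyck path:
it has `m` horizontal and `n` vertical steps and every intermediate lattice point
`(x,y)` satisfies `n*x ≤ m*y` (the path stays weakly above the diagonal `y=(n/m)x`). -/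
def IsDyck (m n : ℕ) (w : List Bool) : Prop :=
  w.count false = m ∧ w.count true = n ∧
    ∀ p ∈ w.inits, n * p.count false ≤ m * p.count true

/-- `x`-coordinate of the point of the path reached after the first `i` steps. -/
def ptX (w : List Bool) (i : ℕ) : ℤ := ((w.take i).count false : ℤ)

/-- `y`-coordinate of the point of the path reached after the first `i` steps. -/
def ptY (w : List Bool) (i : ℕ) : ℤ := ((w.take i).count true : ℤ)

/-- `O(γ)`: pairs `(i,j)` of a horizontal step `i` and a vertical step `j`
appearing later in the path. -/
def Opairs (w : List Bool) : Finset (ℕ × ℕ) :=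
  (Finset.range w.length ×ˢ Finset.range w.length).filter
    (fun ij => ij.1 < ij.2 ∧ w[ij.1]? = some false ∧ w[ij.2]? = some true)

/-- The set of (bottom-left corners of) complete unit lattice squares lying between the
path and the diagonal `y = (n/m)x`: the square `[x,x+1]×[y,y+1]` lies weakly above the
diagonal and strictly below the path. -/
noncomputable def areaSet (m n : ℕ) (w : List Bool) : Finset (ℕ × ℕ) :=
  ((Finset.range m) ×ˢ (Finset.range n)).filter (fun xy =>
    n * (xy.1 + 1) ≤ m * xy.2 ∧
    ∃ i < w.length, w[i]? = some false ∧
      (w.take (i+1)).count false = xy.1 + 1 ∧ xy.2 + 1 ≤ (w.take (i+1)).count true)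

/-- `area(γ)`: the number of complete unit lattice squares between the path and the
diagonal. -/
noncomputable def area (m n : ℕ) (w : List Bool) : ℕ := (areaSet m n w).card

/-- Some line of slope `n/m` (i.e. `{(x,y) | n*x - m*y = c}`) meets both the closed
horizontal step segment `i` and the closed vertical step segment `j`. -/
def MeetsBoth (m n : ℕ) (w : List Bool) (i j : ℕ) : Prop :=
  ∃ c : ℝ,
    (∃ x : ℝ, (ptX w i : ℝ) ≤ x ∧ x ≤ (ptX w i : ℝ) + 1 ∧
      (n : ℝ) * x - (m : ℝ) * (ptY w i : ℝ) = c) ∧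
    (∃ y : ℝ, (ptY w j : ℝ) ≤ y ∧ y ≤ (ptY w j : ℝ) + 1 ∧
      (n : ℝ) * (ptX w j : ℝ) - (m : ℝ) * y = c)

/-- Condition (1A): the line of slope `n/m` through the left endpoint `(a-1,b)` of the
horizontal step `i` meets the closed vertical step segment `j`. -/
def Cond1A (m n : ℕ) (w : List Bool) (i j : ℕ) : Prop :=
  ∃ y : ℝ, (ptY w j : ℝ) ≤ y ∧ y ≤ (ptY w j : ℝ) + 1 ∧
    (n : ℝ) * ((ptX w j : ℝ) - (ptX w i : ℝ)) = (m : ℝ) * (y - (ptY w i : ℝ))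

/-- Condition (2A): the line of slope `n/m` through the top endpoint `(a',b'+1)` of the
vertical step `j` meets the closed horizontal step segment `i`. -/
def Cond2A (m n : ℕ) (w : List Bool) (i j : ℕ) : Prop :=
  ∃ x : ℝ, (ptX w i : ℝ) ≤ x ∧ x ≤ (ptX w i : ℝ) + 1 ∧
    (n : ℝ) * (x - (ptX w j : ℝ)) = (m : ℝ) * ((ptY w i : ℝ) - ((ptY w j : ℝ) + 1))

/-- `H(γ)`: pairs in `O(γ)` admitting a common transversal line parallel to the
diagonal. -/
noncomputable def Hpairs (m n : ℕ) (w : List Bool) : Finset (ℕ × ℕ) :=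
  (Opairs w).filter (fun ij => MeetsBoth m n w ij.1 ij.2)

/-- `H₁(γ)`: pairs in `O(γ)` satisfying condition (1A). -/
noncomputable def H1pairs (m n : ℕ) (w : List Bool) : Finset (ℕ × ℕ) :=
  (Opairs w).filter (fun ij => Cond1A m n w ij.1 ij.2)

/-- `H₂(γ)`: pairs in `O(γ)` satisfying condition (2A). -/
noncomputable def H2pairs (m n : ℕ) (w : List Bool) : Finset (ℕ × ℕ) :=
  (Opairs w).filter (fun ij => Cond2A m n w ij.1 ij.2)

/-- The line of slope `n/m` through the point `(px,py)` meets the closed segment of the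
horizontal step `i`. -/
def lineHitsH (m n : ℕ) (w : List Bool) (px py : ℤ) (i : ℕ) : Prop :=
  w[i]? = some false ∧
    ∃ x : ℝ, (ptX w i : ℝ) ≤ x ∧ x ≤ (ptX w i : ℝ) + 1 ∧
      (n : ℝ) * (x - (px : ℝ)) = (m : ℝ) * ((ptY w i : ℝ) - (py : ℝ))

/-- The line of slope `n/m` through the point `(px,py)` meets the closed segment of the
vertical step `j`. -/
def lineHitsV (m n : ℕ) (w : List Bool) (px py : ℤ) (j : ℕ) : Prop :=
  w[j]? = some true ∧
    ∃ y : ℝ, (ptY w j : ℝ) ≤ y ∧ y ≤ (ptY w j : ℝ) + 1 ∧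
      (n : ℝ) * ((ptX w j : ℝ) - (px : ℝ)) = (m : ℝ) * (y - (py : ℝ))

/-- Outer vertices of the path, encoded by the index `j` of a vertical step that is
immediately followed by a horizontal step; the vertex itself is the point
`(ptX w (j+1), ptY w (j+1))`. -/
def outerIdx (w : List Bool) : Finset ℕ :=
  (Finset.range w.length).filter
    (fun j => w[j]? = some true ∧ w[j+1]? = some false)

/-- The perpendicular distance from the diagonal of the outer vertex indexed by `j`,
measured by `m*y - n*x` (proportional to the true distance). -/
def diagDist (m n : ℕ) (w : List Bool) (j : ℕ) : ℤ :=
  (m : ℤ) * ptY w (j+1) - (n : ℤ) * ptX w (j+1)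

/-- `V(γ)`: outer vertices other than one farthest from the diagonal. -/
def Vset (m n : ℕ) (w : List Bool) : Finset ℕ :=
  (outerIdx w).filter (fun j => ∃ j' ∈ outerIdx w, diagDist m n w j < diagDist m n w j')

/-- `k(p)`: the number of horizontal steps of the path, other than the horizontal step
starting at the outer vertex `p` (indexed by `j`), met by the line of slope `n/m`
through `p`. -/
noncomputable def kH (m n : ℕ) (w : List Bool) (j : ℕ) : ℕ :=
  ((Finset.range w.length).filter
    (fun i => i ≠ j + 1 ∧ lineHitsH m n w (ptX w (j+1)) (ptY w (j+1)) i)).card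

/-- The number of vertical steps of the path, other than the vertical step ending at the
outer vertex `p` (indexed by `j`), met by the line of slope `n/m` through `p`. -/
noncomputable def kV (m n : ℕ) (w : List Bool) (j : ℕ) : ℕ :=
  ((Finset.range w.length).filter
    (fun i => i ≠ j ∧ lineHitsV m n w (ptX w (j+1)) (ptY w (j+1)) i)).card

/-- `k₁(p)`: the number of vertical steps occurring after the outer vertex `p`
(indexed by `j`) met by the line of slope `n/m` through `p`. -/
noncomputable def k1 (m n : ℕ) (w : List Bool) (j : ℕ) : ℕ :=
  ((Finset.range w.length).filter
    (fun i => j < i ∧ lineHitsV m n w (ptX w (j+1)) (ptY w (j+1)) i)).card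

/-- `k₂(p)`: the number of horizontal steps occurring before the outer vertex `p`
(indexed by `j`) met by the line of slope `n/m` through `p`. -/
noncomputable def k2 (m n : ℕ) (w : List Bool) (j : ℕ) : ℕ :=
  ((Finset.range w.length).filter
    (fun i => i ≤ j ∧ lineHitsH m n w (ptX w (j+1)) (ptY w (j+1)) i)).card

/-- The insertion map `γ ↦ γ*`: insert one horizontal step immediately after each
vertical step. -/
def star : List Bool → List Bool
  | [] => []
  | true :: w => true :: false :: star w
  | false :: w => false :: star w

/-- The index in `γ*` of the step corresponding to the step of index `i` in `γ`. -/
def starIdx (w : List Bool) (i : ℕ) : ℕ := i + (w.take i).count true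

/-- A Dyck path is rugged if every vertical step is immediately followed by a
horizontal step. -/
def Rugged (w : List Bool) : Prop :=
  ∀ i, w[i]? = some true → w[i+1]? = some false


lemma count_take_succ (w : List Bool) (i : ℕ) (b : Bool) :
    (w.take (i+1)).count b = (w.take i).count b + (if w[i]? = some b then 1 else 0) := by
  rw [List.take_succ, List.count_append]
  congr 1
  cases h : w[i]? with
  | none => simp
  | some c => cases c <;> cases b <;> simp [List.count_cons]

lemma count_take_mono (w : List Bool) {i j : ℕ} (hij : i ≤ j) (b : Bool) :
    (w.take i).count b ≤ (w.take j).count b := by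
  have e : (w.take j).take i = w.take i := by rw [List.take_take, Nat.min_eq_left hij]
  calc (w.take i).count b = ((w.take j).take i).count b := by rw [e]
    _ ≤ (w.take j).count b := ((w.take j).take_sublist i).count_le b

lemma count_take_le (w : List Bool) (i : ℕ) (b : Bool) :
    (w.take i).count b ≤ w.count b := (w.take_sublist i).count_le b

lemma count_take_succ_of_eq {w : List Bool} {i : ℕ} {b : Bool} (h : w[i]? = some b) :
    (w.take (i+1)).count b = (w.take i).count b + 1 := by
  rw [count_take_succ, if_pos h]

lemma count_take_succ_of_ne {w : List Bool} {i : ℕ} {b : Bool} (h : w[i]? = some !b) :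
    (w.take (i+1)).count b = (w.take i).count b := by
  rw [count_take_succ, if_neg, Nat.add_zero]
  rw [h]; cases b <;> simp

lemma exists_step (w : List Bool) (b : Bool) {k : ℕ} (hk : k < w.count b) :
    ∃ i, i < w.length ∧ w[i]? = some b ∧ (w.take (i+1)).count b = k + 1 := by
  have hP : ∃ j, k + 1 ≤ (w.take j).count b := ⟨w.length, by rw [List.take_length]; exact hk⟩
  have hPj0 : k + 1 ≤ (w.take (Nat.find hP)).count b := Nat.find_spec hP
  have hj0pos : 0 < Nat.find hP := by
    rcases Nat.eq_zero_or_pos (Nat.find hP) with h0 | h0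
    · rw [h0] at hPj0; simp at hPj0
    · exact h0
  obtain ⟨i, hieq⟩ : ∃ i, Nat.find hP = i + 1 := ⟨Nat.find hP - 1, by omega⟩
  rw [hieq] at hPj0
  have hni : ¬ k + 1 ≤ (w.take i).count b := Nat.find_min hP (by omega)
  have hstep := count_take_succ w i b
  have hgi : w[i]? = some b := by
    by_contra hne
    rw [if_neg hne] at hstep; omega
  refine ⟨i, ?_, hgi, by rw [if_pos hgi] at hstep; omega⟩
  exact (List.getElem?_eq_some_iff.mp hgi).1

lemma step_unique (w : List Bool) (b : Bool) {i j : ℕ}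
    (hi : w[i]? = some b) (hj : w[j]? = some b)
    (hc : (w.take (i+1)).count b = (w.take (j+1)).count b) : i = j := by
  rcases lt_trichotomy i j with hlt | heq | hlt
  · exfalso
    have h1 : (w.take (i+1)).count b ≤ (w.take j).count b := count_take_mono w hlt b
    have h2 := count_take_succ_of_eq hj
    omega
  · exact heq
  · exfalso
    have h1 : (w.take (j+1)).count b ≤ (w.take i).count b := count_take_mono w hlt b
    have h2 := count_take_succ_of_eq hi
    omega

lemma no_eq {m n : ℕ} (h : Nat.Coprime m n) {u v : ℕ} (hu1 : 1 ≤ u) (hum : u < m)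
    (hne : n * u = m * v) : False := by
  have hdvd : m ∣ u := by
    have hd : m ∣ u * n := ⟨v, by rw [Nat.mul_comm u n]; exact hne⟩
    exact h.dvd_of_dvd_mul_right hd
  have := Nat.le_of_dvd (by omega) hdvd
  omega

lemma grid_count (m n : ℕ) (hm : 0 < m) (hn : 0 < n) (h : Nat.Coprime m n) :
    2 * (((Finset.range m ×ˢ Finset.range n).filter
      (fun xy => n * (xy.1 + 1) ≤ m * xy.2)).card) = (m-1) * (n-1) := by
  set T := Finset.Ico 1 m ×ˢ Finset.Ico 1 n with hT
  set S := T.filter (fun uv => n * uv.1 < m * uv.2) with hS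
  set S' := T.filter (fun uv => m * uv.2 < n * uv.1) with hS'
  -- G.card = S.card
  have hGS : ((Finset.range m ×ˢ Finset.range n).filter
      (fun xy => n * (xy.1 + 1) ≤ m * xy.2)).card = S.card := by
    apply Finset.card_bij (fun a _ => (a.1 + 1, a.2))
    · rintro ⟨x, y⟩ ha
      simp only [Finset.mem_filter, Finset.mem_product, Finset.mem_range] at ha
      obtain ⟨⟨hx, hy⟩, hc⟩ := ha
      have hxm : x + 1 < m := by
        by_contra hxm
        have hx1 : x + 1 = m := by omega
        rw [hx1] at hc
        nlinarith
      have hne : n * (x+1) ≠ m * y := fun he => no_eq h (by omega) hxm he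
      simp only [hS, hT, Finset.mem_filter, Finset.mem_product, Finset.mem_Ico]
      have hy1 : 1 ≤ y := by
        rcases Nat.eq_zero_or_pos y with h0 | h0
        · exfalso; rw [h0] at hc; simp at hc; omega
        · exact h0
      exact ⟨⟨⟨by omega, hxm⟩, ⟨hy1, hy⟩⟩, lt_of_le_of_ne hc hne⟩
    · rintro ⟨x, y⟩ ha ⟨x', y'⟩ ha' he
      simp only [Prod.mk.injEq] at he ⊢
      omega
    · rintro ⟨u, v⟩ hb
      simp only [hS, hT, Finset.mem_filter, Finset.mem_product, Finset.mem_Ico] at hb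
      obtain ⟨⟨⟨hu1, hum⟩, ⟨hv1, hvn⟩⟩, hc⟩ := hb
      refine ⟨(u - 1, v), ?_, by simp; omega⟩
      simp only [Finset.mem_filter, Finset.mem_product, Finset.mem_range]
      constructor
      · exact ⟨by omega, by omega⟩
      · have : u - 1 + 1 = u := by omega
        rw [this]; omega
  -- S.card = S'.card
  have hSS' : S.card = S'.card := by
    apply Finset.card_bij (fun a _ => (m - a.1, n - a.2))
    · rintro ⟨u, v⟩ ha
      simp only [hS, hS', hT, Finset.mem_filter, Finset.mem_product, Finset.mem_Ico] at ha ⊢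
      obtain ⟨⟨⟨hu1, hum⟩, ⟨hv1, hvn⟩⟩, hc⟩ := ha
      refine ⟨⟨⟨by omega, by omega⟩, ⟨by omega, by omega⟩⟩, ?_⟩
      show m * (n - v) < n * (m - u)
      have e1 : m * (n - v) + m * v = m * n := by rw [← Nat.mul_add]; congr 1; omega
      have e2 : n * (m - u) + n * u = n * m := by rw [← Nat.mul_add]; congr 1; omega
      have e3 : m * n = n * m := Nat.mul_comm m n
      omega
    · rintro ⟨u, v⟩ ha ⟨u', v'⟩ ha' he
      simp only [hS, hT, Finset.mem_filter, Finset.mem_product, Finset.mem_Ico] at ha ha'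
      simp only [Prod.mk.injEq] at he ⊢
      omega
    · rintro ⟨u, v⟩ hb
      simp only [hS, hS', hT, Finset.mem_filter, Finset.mem_product, Finset.mem_Ico] at hb ⊢
      obtain ⟨⟨⟨hu1, hum⟩, ⟨hv1, hvn⟩⟩, hc⟩ := hb
      refine ⟨(m - u, n - v), ⟨⟨⟨by omega, by omega⟩, ⟨by omega, by omega⟩⟩, ?_⟩, by
        simp only [Prod.mk.injEq]; omega⟩
      show n * (m - u) < m * (n - v)
      have e1 : m * (n - v) + m * v = m * n := by rw [← Nat.mul_add]; congr 1; omega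
      have e2 : n * (m - u) + n * u = n * m := by rw [← Nat.mul_add]; congr 1; omega
      have e3 : m * n = n * m := Nat.mul_comm m n
      omega
  -- S.card + S'.card = T.card
  have hsum : S.card + S'.card = T.card := by
    have hS'eq : S' = T.filter (fun uv => ¬ n * uv.1 < m * uv.2) := by
      ext ⟨u, v⟩
      simp only [hS', hT, Finset.mem_filter, Finset.mem_product, Finset.mem_Ico]
      constructor
      · rintro ⟨hmem, hc⟩
        refine ⟨hmem, ?_⟩
        show ¬ n * u < m * v
        omega
      · rintro ⟨hmem, hc⟩
        replace hc : ¬ n * u < m * v := hc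
        refine ⟨hmem, ?_⟩
        rcases Nat.lt_or_ge (m * v) (n * u) with h1 | h1
        · exact h1
        · exfalso; exact no_eq h hmem.1.1 hmem.1.2 (show n * u = m * v by omega)
    rw [hS'eq, hS, Finset.card_filter_add_card_filter_not]
  have hTcard : T.card = (m - 1) * (n - 1) := by
    rw [hT, Finset.card_product, Nat.card_Ico, Nat.card_Ico]
  omega

lemma key_identity (m n : ℕ) (w : List Bool) (hw : IsDyck m n w) :
    area m n w + (Opairs w).card =
      ((Finset.range m ×ˢ Finset.range n).filter
        (fun xy => n * (xy.1 + 1) ≤ m * xy.2)).card := by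
  obtain ⟨hF, hT, hD⟩ := hw
  have hex : ∀ x, ∃ i, x < m → i < w.length ∧ w[i]? = some false ∧
      (w.take (i+1)).count false = x + 1 := by
    intro x
    by_cases hx : x < m
    · obtain ⟨i, hi⟩ := exists_step w false (k := x) (by rw [hF]; exact hx)
      exact ⟨i, fun _ => hi⟩
    · exact ⟨0, fun hc => absurd hc hx⟩
  choose f hf using hex
  set Y : ℕ → ℕ := fun x => (w.take (f x)).count true with hY
  have hfF : ∀ x, x < m → w[f x]? = some false := fun x hx => (hf x hx).2.1
  have hfC : ∀ x, x < m → (w.take (f x + 1)).count false = x + 1 :=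
    fun x hx => (hf x hx).2.2
  have hfCx : ∀ x, x < m → (w.take (f x)).count false = x := by
    intro x hx
    have := count_take_succ_of_eq (hfF x hx)
    have h2 := hfC x hx
    omega
  have hfT : ∀ x, x < m → (w.take (f x + 1)).count true = Y x := by
    intro x hx
    exact count_take_succ_of_ne (by simpa using hfF x hx)
  have hDiag : ∀ x, x < m → n * (x + 1) ≤ m * Y x := by
    intro x hx
    have hmem : w.take (f x + 1) ∈ w.inits := by
      rw [List.mem_inits]; exact List.take_prefix _ _
    have hd := hD _ hmem
    rwa [hfC x hx, hfT x hx] at hd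
  -- areaSet description
  have hA : areaSet m n w = ((Finset.range m ×ˢ Finset.range n).filter
      (fun xy => n * (xy.1 + 1) ≤ m * xy.2)).filter (fun xy => xy.2 < Y xy.1) := by
    rw [Finset.filter_filter]
    ext ⟨x, y⟩
    simp only [areaSet, Finset.mem_filter, Finset.mem_product, Finset.mem_range]
    constructor
    · rintro ⟨⟨hx, hy⟩, hc, i, hil, hgi, hcf, hct⟩
      refine ⟨⟨hx, hy⟩, hc, ?_⟩
      have hieq : i = f x := step_unique w false hgi (hfF x hx)
        (by rw [hcf, hfC x hx])
      rw [hieq] at hct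
      have := hfT x hx
      omega
    · rintro ⟨⟨hx, hy⟩, hc, hlt⟩
      refine ⟨⟨hx, hy⟩, hc, f x, (hf x hx).1, hfF x hx, hfC x hx, ?_⟩
      rw [hfT x hx]; omega
  -- Opairs card
  have hO : (Opairs w).card = ((Finset.range m ×ˢ Finset.range n).filter
      (fun xy => Y xy.1 ≤ xy.2)).card := by
    apply Finset.card_bij
      (fun ij _ => ((w.take ij.1).count false, (w.take ij.2).count true))
    · rintro ⟨i, j⟩ hij
      simp only [Opairs, Finset.mem_filter, Finset.mem_product, Finset.mem_range] at hij
      obtain ⟨⟨hil, hjl⟩, hlt, hgi, hgj⟩ := hij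
      have hci := count_take_succ_of_eq hgi
      have hcj := count_take_succ_of_eq hgj
      have hxm : (w.take i).count false < m := by
        have h1 : (w.take (i+1)).count false ≤ m := by rw [← hF]; exact count_take_le w _ _
        omega
      have hyn : (w.take j).count true < n := by
        have h1 : (w.take (j+1)).count true ≤ n := by rw [← hT]; exact count_take_le w _ _
        omega
      simp only [Finset.mem_filter, Finset.mem_product, Finset.mem_range]
      refine ⟨⟨hxm, hyn⟩, ?_⟩
      have hieq : f ((w.take i).count false) = i :=
        step_unique w false (hfF _ hxm) hgi (by rw [hfC _ hxm]; omega)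
      show Y ((w.take i).count false) ≤ (w.take j).count true
      rw [hY]
      simp only
      rw [hieq]
      exact count_take_mono w hlt.le true
    · rintro ⟨i, j⟩ hij ⟨i', j'⟩ hij' he
      simp only [Opairs, Finset.mem_filter, Finset.mem_product, Finset.mem_range] at hij hij'
      obtain ⟨_, _, hgi, hgj⟩ := hij
      obtain ⟨_, _, hgi', hgj'⟩ := hij'
      simp only [Prod.mk.injEq] at he ⊢
      obtain ⟨he1, he2⟩ := he
      constructor
      · exact step_unique w false hgi hgi' (by
          rw [count_take_succ_of_eq hgi, count_take_succ_of_eq hgi', he1])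
      · exact step_unique w true hgj hgj' (by
          rw [count_take_succ_of_eq hgj, count_take_succ_of_eq hgj', he2])
    · rintro ⟨x, y⟩ hxy
      simp only [Finset.mem_filter, Finset.mem_product, Finset.mem_range] at hxy
      obtain ⟨⟨hx, hy⟩, hYx⟩ := hxy
      obtain ⟨j, hjl, hgj, hcj⟩ := exists_step w true (k := y) (by rw [hT]; exact hy)
      have hcjy : (w.take j).count true = y := by
        have := count_take_succ_of_eq hgj; omega
      have hij : f x < j := by
        rcases lt_trichotomy (f x) j with h1 | h1 | h1
        · exact h1
        · exfalso
          have := hfF x hx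
          rw [h1, hgj] at this
          simp at this
        · exfalso
          have h2 : (w.take (j+1)).count true ≤ (w.take (f x)).count true :=
            count_take_mono w (by omega) true
          have h3 : Y x = (w.take (f x)).count true := rfl
          omega
      refine ⟨(f x, j), ?_, ?_⟩
      · simp only [Opairs, Finset.mem_filter, Finset.mem_product, Finset.mem_range]
        exact ⟨⟨(hf x hx).1, hjl⟩, hij, hfF x hx, hgj⟩
      · simp only [Prod.mk.injEq]
        exact ⟨hfCx x hx, hcjy⟩
  -- combine
  have hBsub : ((Finset.range m ×ˢ Finset.range n).filter (fun xy => Y xy.1 ≤ xy.2)) =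
      ((Finset.range m ×ˢ Finset.range n).filter
        (fun xy => n * (xy.1 + 1) ≤ m * xy.2)).filter (fun xy => ¬ xy.2 < Y xy.1) := by
    rw [Finset.filter_filter]
    ext ⟨x, y⟩
    simp only [Finset.mem_filter, Finset.mem_product, Finset.mem_range, not_lt]
    constructor
    · rintro ⟨⟨hx, hy⟩, hc⟩
      refine ⟨⟨hx, hy⟩, ?_, hc⟩
      calc n * (x + 1) ≤ m * Y x := hDiag x hx
        _ ≤ m * y := Nat.mul_le_mul_left m hc
    · rintro ⟨⟨hx, hy⟩, _, hc⟩
      exact ⟨⟨hx, hy⟩, hc⟩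
  rw [area, hA, hO, hBsub]
  exact Finset.card_filter_add_card_filter_not _


/-- `0 ≤ h(γ) ≤ |O(γ)| ≤ (m-1)(n-1)/2`, hence
`0 ≤ area(γ) ≤ (m-1)(n-1)/2`, and `area(γ) + |O(γ)| = (m-1)(n-1)/2`. -/
theorem statement18 (m n : ℕ) (hm : 0 < m) (hn : 0 < n) (h : Nat.Coprime m n)
    (w : List Bool) (hw : IsDyck m n w) :
    (Hpairs m n w).card ≤ (Opairs w).card ∧
    ((Opairs w).card : ℚ) ≤ ((m : ℚ) - 1) * ((n : ℚ) - 1) / 2 ∧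
    (area m n w : ℚ) ≤ ((m : ℚ) - 1) * ((n : ℚ) - 1) / 2 ∧
    (area m n w : ℚ) + ((Opairs w).card : ℚ) = ((m : ℚ) - 1) * ((n : ℚ) - 1) / 2 := by
  have hkey := key_identity m n w hw
  have hgrid := grid_count m n hm hn h
  have h2 : 2 * (area m n w + (Opairs w).card) = (m - 1) * (n - 1) := by
    rw [hkey]; exact hgrid
  have hcast : ((m : ℚ) - 1) * ((n : ℚ) - 1) =
      (((m - 1) * (n - 1) : ℕ) : ℚ) := by
    push_cast [Nat.cast_sub hm, Nat.cast_sub hn]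
    ring
  have hQ : (area m n w : ℚ) + ((Opairs w).card : ℚ) =
      ((m : ℚ) - 1) * ((n : ℚ) - 1) / 2 := by
    rw [hcast, ← h2]
    push_cast
    ring
  refine ⟨Finset.card_filter_le _ _, ?_, ?_, hQ⟩
  · have : ((Opairs w).card : ℚ) ≤ (area m n w : ℚ) + ((Opairs w).card : ℚ) := by
      have : (0 : ℚ) ≤ (area m n w : ℚ) := Nat.cast_nonneg _
      linarith
    linarith [hQ]
  · have : (0 : ℚ) ≤ ((Opairs w).card : ℚ) := Nat.cast_nonneg _
    linarith [hQ]
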